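/- Consistency for ratios of expectations: let r : I → ℝ and s : I → (0,∞) be measurable, φ convex with subgradient φ'. Then the scoring function S(x,y) = s(y)(φ(y) − φ(x)) − φ'(x)(r(y) − x s(y)) + φ'(y)(r(y) − y s(y)) is consistent for the functional T(F) = E_F[r(Y)] / E_F[s(Y)], relative to the class of probability measures F on I for which E_F[r(Y)], E_F[s(Y)], E_F[r(Y)φ'(Y)], E_F[s(Y)φ(Y)] and E_F[Y s(Y) φ'(Y)] exist and are finite; if φ is strictly convex, S is strictly consistent. -/

import Mathlib

open MeasureTheory Set

/-- Theorem 8(b) of the paper: consistency of the Bregman-type scoring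
function for ratios of expectations `T(F) = E_F[r(Y)]/E_F[s(Y)]`. -/
theorem bregman_consistent_for_ratio_of_expectations
    (I : Set ℝ) (hI : Convex ℝ I)
    (r s : ℝ → ℝ) (hr : Measurable r) (hs : Measurable s)
    (hspos : ∀ y ∈ I, 0 < s y)
    (φ φ' : ℝ → ℝ) (hconv : ConvexOn ℝ I φ)
    (hsub : ∀ x ∈ I, ∀ y ∈ I, φ x + φ' x * (y - x) ≤ φ y)
    (S : ℝ → ℝ → ℝ)
    (hSdef : ∀ x y, S x y =
      s y * (φ y - φ x) - φ' x * (r y - x * s y) + φ' y * (r y - y * s y))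
    (F : Measure ℝ) [IsProbabilityMeasure F] (hFI : ∀ᵐ y ∂F, y ∈ I)
    (hint1 : Integrable (fun y => r y) F)
    (hint2 : Integrable (fun y => s y) F)
    (hint3 : Integrable (fun y => r y * φ' y) F)
    (hint4 : Integrable (fun y => s y * φ y) F)
    (hint5 : Integrable (fun y => y * s y * φ' y) F)
    (hTI : (∫ y, r y ∂F) / (∫ y, s y ∂F) ∈ I) :
    (∀ x ∈ I,
      ∫ y, S ((∫ y, r y ∂F) / (∫ y, s y ∂F)) y ∂F ≤ ∫ y, S x y ∂F) ∧
    (StrictConvexOn ℝ I φ → ∀ x ∈ I, x ≠ (∫ y, r y ∂F) / (∫ y, s y ∂F) →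
      ∫ y, S ((∫ y, r y ∂F) / (∫ y, s y ∂F)) y ∂F < ∫ y, S x y ∂F) := by
  set Rv := ∫ y, r y ∂F with hRvdef
  set Sv := ∫ y, s y ∂F with hSvdef
  set t := Rv / Sv with htdef
  -- positivity of Sv
  have hSvpos : 0 < Sv := by
    rw [hSvdef, integral_pos_iff_support_of_nonneg_ae
      (hFI.mono fun y hy => (hspos y hy).le) hint2]
    have : ∀ᵐ y ∂F, y ∈ Function.support fun y => s y :=
      hFI.mono fun y hy => (hspos y hy).ne'
    have h1 : F (Function.support fun y => s y) = 1 := by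
      refine le_antisymm prob_le_one ?_
      calc (1:ENNReal) = F univ := (measure_univ).symm
      _ ≤ F (Function.support fun y => s y) :=
        measure_mono_ae (this.mono fun y h _ => h)
    simp [h1]
  have hSvne : Sv ≠ 0 := hSvpos.ne'
  have hRt : Rv = t * Sv := by rw [htdef, div_mul_cancel₀ _ hSvne]
  -- closed form for the expected score
  have hkey : ∀ x, Integrable (fun y => S x y) F ∧
      ∫ y, S x y ∂F =
        (∫ y, s y * φ y ∂F) - φ x * Sv - φ' x * Rv + (φ' x * x) * Sv
          + (∫ y, r y * φ' y ∂F) - ∫ y, y * s y * φ' y ∂F := by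
    intro x
    have hfun : (fun y => S x y) =
        fun y => (s y * φ y - φ x * s y - φ' x * r y + (φ' x * x) * s y
          + r y * φ' y) - y * s y * φ' y := by
      funext y; rw [hSdef]; ring
    have hI2' : Integrable (fun y => s y * φ y - φ x * s y) F :=
      hint4.sub (hint2.const_mul _)
    have hI3' : Integrable (fun y => s y * φ y - φ x * s y - φ' x * r y) F :=
      hI2'.sub (hint1.const_mul _)
    have hI4' : Integrable (fun y => s y * φ y - φ x * s y - φ' x * r y
        + (φ' x * x) * s y) F := hI3'.add (hint2.const_mul _)
    have hI5 : Integrable (fun y => s y * φ y - φ x * s y - φ' x * r y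
        + (φ' x * x) * s y + r y * φ' y) F := hI4'.add hint3
    constructor
    · rw [hfun]; exact hI5.sub hint5
    · rw [hfun, integral_sub hI5 hint5, integral_add hI4' hint3,
        integral_add hI3' (hint2.const_mul _), integral_sub hI2' (hint1.const_mul _),
        integral_sub hint4 (hint2.const_mul _)]
      simp only [integral_const_mul]; rfl
  -- the Bregman identity
  have hdiff : ∀ x, ∫ y, S x y ∂F - ∫ y, S t y ∂F
      = Sv * (φ t - φ x - φ' x * (t - x)) := by
    intro x
    rw [(hkey x).2, (hkey t).2, hRt]; ring
  constructor
  · intro x hx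
    have h := hsub x hx t hTI
    have : 0 ≤ ∫ y, S x y ∂F - ∫ y, S t y ∂F := by
      rw [hdiff x]
      have : 0 ≤ φ t - φ x - φ' x * (t - x) := by linarith
      positivity
    linarith
  · intro hstrict x hx hxt
    have hbreg : φ x + φ' x * (t - x) < φ t := by
      by_contra hle
      push_neg at hle
      have heq : φ x + φ' x * (t - x) = φ t := le_antisymm (hsub x hx t hTI) hle
      -- midpoint argument
      set m := (x + t) / 2 with hm
      have hmval : (1/2 : ℝ) • x + (1/2 : ℝ) • t = m := by
        simp only [smul_eq_mul, hm]; ring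
      have hmI : m ∈ I := hmval ▸ hI hx hTI (by norm_num : (0:ℝ) ≤ 1/2)
        (by norm_num : (0:ℝ) ≤ 1/2) (by norm_num)
      have hlt := hstrict.2 hx hTI hxt (by norm_num : (0:ℝ) < 1/2)
        (by norm_num : (0:ℝ) < 1/2) (by norm_num)
      rw [hmval] at hlt
      have hsubm := hsub x hx m hmI
      have : φ' x * (m - x) = φ' x * (t - x) / 2 := by rw [hm]; ring
      simp only [smul_eq_mul] at hlt
      nlinarith [hsubm, heq, hlt]
    have : 0 < ∫ y, S x y ∂F - ∫ y, S t y ∂F := by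
      rw [hdiff x]
      have h1 : 0 < φ t - φ x - φ' x * (t - x) := by linarith
      positivity
    linarith
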